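/- Let 0 < ε < 10^{-3}, d = ε^{-1/4}, H = ε^{-1/2}. Let f₁, f₂, f₃ ≥ 0 with f₁ + f₂ + f₃ ≤ 1. If ((1+ε)/(1−ε)) · ( f₁·(d+H+1) + f₂·(d+H) + f₃·H ) ≥ (1−ε)·(d+H+1), then f₁ ≥ 1 − 10·ε^{1/2}. -/
import Mathlib


/-- **Case I.** Let `0 < ε < 10⁻³`, `d = ε^{-1/4}`, `H = ε^{-1/2}`, and let
`f₁, f₂, f₃ ≥ 0` with `f₁ + f₂ + f₃ ≤ 1`. If
`((1+ε)/(1-ε)) · (f₁·(d+H+1) + f₂·(d+H) + f₃·H) ≥ (1-ε)·(d+H+1)`, then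
`f₁ ≥ 1 - 10·ε^{1/2}`. -/
theorem case_I_favorite_edge (ε d H f₁ f₂ f₃ : ℝ)
    (hε0 : 0 < ε) (hε1 : ε < 1/1000)
    (hd : d = ε ^ (-(1:ℝ)/4)) (hH : H = ε ^ (-(1:ℝ)/2))
    (h1 : 0 ≤ f₁) (h2 : 0 ≤ f₂) (h3 : 0 ≤ f₃)
    (hsum : f₁ + f₂ + f₃ ≤ 1)
    (hineq : (1 - ε) * (d + H + 1) ≤
      (1 + ε) / (1 - ε) * (f₁ * (d + H + 1) + f₂ * (d + H) + f₃ * H)) :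
    1 - 10 * ε ^ ((1:ℝ)/2) ≤ f₁ := by
  have hε1' : ε ≤ 1 := by linarith
  have hdp : 0 < d := hd ▸ Real.rpow_pos_of_pos hε0 _
  have hHp : 0 < H := hH ▸ Real.rpow_pos_of_pos hε0 _
  have hme : 0 < 1 - ε := by linarith
  -- ε * H = ε^{1/2}
  have hεH : ε * H = ε ^ ((1:ℝ)/2) := by
    rw [hH]
    rw [show ε * ε ^ (-(1:ℝ)/2) = ε ^ (1:ℝ) * ε ^ (-(1:ℝ)/2) by rw [Real.rpow_one],
      ← Real.rpow_add hε0]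
    norm_num
  -- ε * d = ε^{3/4} ≤ ε^{1/2}
  have hεd : ε * d ≤ ε ^ ((1:ℝ)/2) := by
    rw [hd, show ε * ε ^ (-(1:ℝ)/4) = ε ^ (1:ℝ) * ε ^ (-(1:ℝ)/4) by rw [Real.rpow_one],
      ← Real.rpow_add hε0]
    exact Real.rpow_le_rpow_of_exponent_ge hε0 hε1' (by norm_num)
  have hεs : ε ≤ ε ^ ((1:ℝ)/2) := by
    nth_rewrite 1 [show ε = ε ^ (1:ℝ) by rw [Real.rpow_one]]
    exact Real.rpow_le_rpow_of_exponent_ge hε0 hε1' (by norm_num)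
  -- clear denominator
  have hX : f₁ * (d + H + 1) + f₂ * (d + H) + f₃ * H ≤ d + H + f₁ := by
    nlinarith [mul_nonneg h3 hdp.le]
  have key : (1 - ε) * ((1 - ε) * (d + H + 1)) ≤ (1 + ε) * (d + H + f₁) := by
    have h := hineq
    rw [div_mul_eq_mul_div, le_div_iff₀ hme] at h
    nlinarith
  -- deduce f₁ ≥ 1 - 3ε(1+d+H)
  have hf : 1 - 3 * ε * (1 + d + H) ≤ f₁ := by
    nlinarith [mul_pos hdp hHp, sq_nonneg ε, mul_nonneg (mul_nonneg hε0.le hε0.le) (by linarith : (0:ℝ) ≤ 1 + d + H)]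
  nlinarith [hεH, hεd, hεs]
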